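/- Suppose that with probability 1 the function h ↦ S_1(h) is continuous on H, that sup_{h∈H} |S_1(h)| is measurable, and that E(sup_{h∈H} |S_1(h)|) < ∞. Then, almost surely, sup_{h∈H} | (∑_{r=1}^R S_r(h)) / (∑_{r=1}^R N_r) − E(S_1(h))/E(N_1) | → 0 as R → ∞. -/

import Mathlib

open MeasureTheory ProbabilityTheory Filter Topology

section AuxLemmas

variable {K : Type*} [MetricSpace K] [CompactSpace K] [SecondCountableTopology K]

/-- A map into `C(K, ℝ)` (with the Borel σ-algebra) is measurable as soon as all its
evaluations along a dense sequence are measurable. -/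
lemma aux_measurable_of_eval {α : Type*} [MeasurableSpace α]
    (d : ℕ → K) (hd : DenseRange d) (u : α → C(K, ℝ))
    (h : ∀ n, Measurable fun a => u a (d n)) :
    @Measurable _ _ _ (borel C(K, ℝ)) u := by
  letI : MeasurableSpace C(K, ℝ) := borel _
  haveI : BorelSpace C(K, ℝ) := ⟨rfl⟩
  have hecont : Continuous (fun (f : C(K, ℝ)) (n : ℕ) => f (d n)) :=
    continuous_pi fun n => continuous_eval_const (d n)
  have heinj : Function.Injective (fun (f : C(K, ℝ)) (n : ℕ) => f (d n)) := by
    intro f g hfg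
    apply ContinuousMap.coe_injective
    refine Continuous.ext_on hd f.continuous g.continuous ?_
    rintro _ ⟨n, rfl⟩
    exact congrFun hfg n
  have hemb : MeasurableEmbedding (fun (f : C(K, ℝ)) (n : ℕ) => f (d n)) :=
    hecont.measurableEmbedding heinj
  rw [← hemb.measurable_comp_iff]
  exact measurable_pi_iff.2 h

/-- There is a measurable map `Ψ : (K → ℝ) → C(K, ℝ)` that restores every continuous
function. -/
lemma aux_exists_psi (d : ℕ → K) (hd : DenseRange d) :
    ∃ Ψ : (K → ℝ) → C(K, ℝ),
      (@Measurable _ _ _ (borel C(K, ℝ)) Ψ) ∧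
      ∀ f : K → ℝ, Continuous f → ∀ x, Ψ f x = f x := by
  classical
  set E : Set (K → ℝ) := {f | ∃ g : C(K, ℝ), ∀ n, g (d n) = f (d n)} with hE
  have hEmeas : MeasurableSet E := by
    have hEeq : E = ⋂ j : ℕ, ⋃ i : ℕ, ⋂ m : ℕ, ⋂ n : ℕ,
        {f : K → ℝ | dist (d m) (d n) < 1 / (i + 1) → |f (d m) - f (d n)| ≤ 1 / (j + 1)} := by
      ext f
      simp only [hE, Set.mem_setOf_eq, Set.mem_iInter, Set.mem_iUnion]
      constructor
      · rintro ⟨g, hg⟩ j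
        have hUC : UniformContinuous g :=
          CompactSpace.uniformContinuous_of_continuous g.continuous
        obtain ⟨δ, δpos, hδ⟩ := Metric.uniformContinuous_iff.1 hUC (1 / (j + 1 : ℝ))
          (by positivity)
        obtain ⟨i, hi⟩ := exists_nat_one_div_lt δpos
        refine ⟨i, fun m n hmn => ?_⟩
        rw [← hg m, ← hg n]
        have h2 := hδ (lt_trans hmn hi)
        rw [Real.dist_eq] at h2
        exact h2.le
      · intro hf
        set T : Set K := Set.range d with hT
        have hTdense : Dense T := hd
        have hUC : UniformContinuous fun t : T => f ↑t := by
          rw [Metric.uniformContinuous_iff]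
          intro ε εpos
          obtain ⟨j, hj⟩ := exists_nat_one_div_lt εpos
          obtain ⟨i, hi⟩ := hf j
          refine ⟨1 / (i + 1), by positivity, ?_⟩
          rintro ⟨_, m, rfl⟩ ⟨_, n, rfl⟩ hdist
          rw [Subtype.dist_eq] at hdist
          have h1 : |f (d m) - f (d n)| ≤ 1 / (j + 1) := hi m n hdist
          calc dist (f (d m)) (f (d n)) ≤ 1 / (j + 1) := by rwa [Real.dist_eq]
          _ < ε := hj
        have h_e : IsUniformInducing (Subtype.val : T → K) :=
          isUniformEmbedding_subtype_val.isUniformInducing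
        have h_dense : DenseRange (Subtype.val : T → K) := by
          rw [DenseRange, Subtype.range_coe]; exact hTdense
        set ψ : K → ℝ := (h_e.isDenseInducing h_dense).extend (fun t : T => f ↑t) with hψ
        have hψc : Continuous ψ :=
          (uniformContinuous_uniformly_extend h_e h_dense hUC).continuous
        refine ⟨⟨ψ, hψc⟩, fun n => ?_⟩
        have := (h_e.isDenseInducing h_dense).extend_eq hUC.continuous
          (⟨d n, ⟨n, rfl⟩⟩ : T)
        exact this
    rw [hEeq]
    refine MeasurableSet.iInter fun j => MeasurableSet.iUnion fun i =>
      MeasurableSet.iInter fun m => MeasurableSet.iInter fun n => ?_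
    by_cases hcond : dist (d m) (d n) < 1 / (i + 1 : ℝ)
    · have : {f : K → ℝ | dist (d m) (d n) < 1 / (i + 1) → |f (d m) - f (d n)| ≤ 1 / (j + 1)}
          = {f : K → ℝ | |f (d m) - f (d n)| ≤ 1 / (j + 1)} := by
        ext f
        simp only [Set.mem_setOf_eq]
        exact ⟨fun hh => hh hcond, fun hh _ => hh⟩
      rw [this]
      have hmeas : Measurable fun f : K → ℝ => |f (d m) - f (d n)| :=
        ((measurable_pi_apply (d m)).sub (measurable_pi_apply (d n))).abs
      exact measurableSet_le hmeas measurable_const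
    · have : {f : K → ℝ | dist (d m) (d n) < 1 / (i + 1) → |f (d m) - f (d n)| ≤ 1 / (j + 1)}
          = Set.univ := by
        ext f
        simp only [Set.mem_setOf_eq, Set.mem_univ, iff_true]
        exact fun hh => absurd hh hcond
      rw [this]; exact MeasurableSet.univ
  refine ⟨fun f => if hf : f ∈ E then hf.choose else 0, ?_, ?_⟩
  · refine aux_measurable_of_eval d hd _ fun n => ?_
    have heq : (fun f : K → ℝ => (if hf : f ∈ E then hf.choose else 0 : C(K, ℝ)) (d n))
        = fun f : K → ℝ => if f ∈ E then f (d n) else 0 := by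
      ext f
      by_cases hf : f ∈ E
      · rw [dif_pos hf, if_pos hf]; exact hf.choose_spec n
      · rw [dif_neg hf, if_neg hf]; rfl
    rw [heq]
    exact Measurable.ite hEmeas (measurable_pi_apply (d n)) measurable_const
  · intro f hf x
    have hfE : f ∈ E := ⟨⟨f, hf⟩, fun n => rfl⟩
    have hchoose : ⇑(hfE.choose) = f := by
      refine Continuous.ext_on hd hfE.choose.continuous hf ?_
      rintro _ ⟨n, rfl⟩
      exact hfE.choose_spec n
    simp only [dif_pos hfE]
    exact congrFun hchoose x

end AuxLemmas

/-- Glivenko–Cantelli, regenerative/Markov-chain case.  For iid tour pairs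
`(N_r, S_r)` with `N_r ≥ 1`, `E N₁ < ∞`, `h ↦ S₁(h)` a.s. continuous on the compact set `H`,
and `sup_{h ∈ H} |S₁(h)|` measurable with finite expectation,
`sup_{h ∈ H} |∑_{r≤R} S_r(h) / ∑_{r≤R} N_r − E S₁(h) / E N₁| → 0` almost surely. -/
theorem stmt3 {k : ℕ} (H : Set (EuclideanSpace ℝ (Fin k))) (hH : IsCompact H)
    {Ω : Type*} [MeasurableSpace Ω] (μ : Measure Ω) [IsProbabilityMeasure μ]
    (N : ℕ → Ω → ℕ) (S : ℕ → Ω → H → ℝ)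
    (hN_pos : ∀ r ω, 1 ≤ N r ω)
    (hiid_indep : iIndepFun (fun r ω => (N r ω, S r ω)) μ)
    (hiid_ident : ∀ r, IdentDistrib (fun ω => (N r ω, S r ω)) (fun ω => (N 0 ω, S 0 ω)) μ μ)
    (hN_int : Integrable (fun ω => (N 0 ω : ℝ)) μ)
    (hS_cont : ∀ r, ∀ᵐ ω ∂μ, Continuous (S r ω))
    (hsup_meas : ∀ r, Measurable (fun ω => ⨆ h : H, |S r ω h|))
    (hsup_int : ∀ r, Integrable (fun ω => ⨆ h : H, |S r ω h|) μ) :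
    ∀ᵐ ω ∂μ, Tendsto (fun R : ℕ =>
        ⨆ h : H, |(∑ r ∈ Finset.range R, S r ω h) / (∑ r ∈ Finset.range R, (N r ω : ℝ))
          - (∫ ω', S 0 ω' h ∂μ) / (∫ ω', (N 0 ω' : ℝ) ∂μ)|)
      atTop (𝓝 0) := by
  classical
  rcases isEmpty_or_nonempty H with hempty | hne
  · refine Eventually.of_forall fun ω => ?_
    have hz : (fun R : ℕ =>
        ⨆ h : H, |(∑ r ∈ Finset.range R, S r ω h) / (∑ r ∈ Finset.range R, (N r ω : ℝ))
          - (∫ ω', S 0 ω' h ∂μ) / (∫ ω', (N 0 ω' : ℝ) ∂μ)|) = fun _ => (0 : ℝ) :=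
      funext fun R => Real.iSup_of_isEmpty _
    rw [hz]; exact tendsto_const_nhds
  haveI : CompactSpace H := isCompact_iff_compactSpace.mp hH
  letI : MeasurableSpace C(H, ℝ) := borel _
  haveI : BorelSpace C(H, ℝ) := ⟨rfl⟩
  set d : ℕ → H := TopologicalSpace.denseSeq H with hdd
  have hd : DenseRange d := TopologicalSpace.denseRange_denseSeq H
  obtain ⟨Ψ, hΨmeas, hΨeq⟩ := aux_exists_psi d hd
  -- the C(H, ℝ)-valued tour sums
  set Y : ℕ → Ω → C(H, ℝ) := fun r ω => Ψ (S r ω) with hY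
  set Φ : ℕ × (H → ℝ) → C(H, ℝ) := fun p => Ψ p.2 with hΦdef
  have hΦ : Measurable Φ := hΨmeas.comp measurable_snd
  have hYindep : Pairwise (Function.onFun (IndepFun · · μ) Y) := fun i j hij =>
    (hiid_indep.indepFun hij).comp hΦ hΦ
  have hYident : ∀ i, IdentDistrib (Y i) (Y 0) μ μ := fun i =>
    (hiid_ident i).comp hΦ
  have hY0sm : AEStronglyMeasurable (Y 0) μ := by
    have hpair : AEMeasurable (fun ω => (N 0 ω, S 0 ω)) μ := (hiid_ident 0).aemeasurable_fst
    exact (hΦ.comp_aemeasurable hpair).aestronglyMeasurable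
  have hY0int : Integrable (Y 0) μ := by
    refine Integrable.mono' (hsup_int 0) hY0sm ?_
    filter_upwards [hS_cont 0] with ω hω
    have : ‖Y 0 ω‖ = ⨆ h : H, |S 0 ω h| := by
      rw [ContinuousMap.norm_eq_iSup_norm]
      congr 1
      funext h
      rw [Real.norm_eq_abs]
      congr 1
      show (Ψ (S 0 ω)) h = S 0 ω h
      exact hΨeq _ hω h
    exact this.le
  have hA := strong_law_ae Y hY0int hYindep hYident
  -- the real-valued tour lengths
  set Nr : ℕ → Ω → ℝ := fun r ω => (N r ω : ℝ) with hNr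
  have hφN : Measurable (fun p : ℕ × (H → ℝ) => (p.1 : ℝ)) :=
    measurable_from_top.comp measurable_fst
  have hNindep : Pairwise (Function.onFun (IndepFun · · μ) Nr) := fun i j hij =>
    (hiid_indep.indepFun hij).comp hφN hφN
  have hNident : ∀ i, IdentDistrib (Nr i) (Nr 0) μ μ := fun i =>
    (hiid_ident i).comp hφN
  have hB := strong_law_ae_real Nr hN_int hNindep hNident
  -- the limits
  set M : C(H, ℝ) := μ[Y 0] with hM
  set nN : ℝ := ∫ ω', (N 0 ω' : ℝ) ∂μ with hnN
  have hnN1 : (1 : ℝ) ≤ nN := by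
    have h1 : (1 : ℝ) = ∫ _ω', (1 : ℝ) ∂μ := by simp
    rw [hnN, h1]
    refine integral_mono (integrable_const 1) hN_int fun ω => ?_
    simpa using hN_pos 0 ω
  have hnN0 : nN ≠ 0 := by linarith
  have hMh : ∀ h : H, M h = ∫ ω', S 0 ω' h ∂μ := by
    intro h
    have h2 : ∫ ω', Y 0 ω' h ∂μ = ∫ ω', S 0 ω' h ∂μ := by
      refine integral_congr_ae ?_
      filter_upwards [hS_cont 0] with ω hω
      exact hΨeq _ hω h
    calc M h = (ContinuousMap.evalCLM (M := ℝ) ℝ h) M := rfl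
    _ = ∫ ω', (ContinuousMap.evalCLM (M := ℝ) ℝ h) (Y 0 ω') ∂μ :=
      (ContinuousLinearMap.integral_comp_comm _ hY0int).symm
    _ = ∫ ω', Y 0 ω' h ∂μ := rfl
    _ = ∫ ω', S 0 ω' h ∂μ := h2
  -- almost sure continuity of all tours
  have hcontall : ∀ᵐ ω ∂μ, ∀ r, Continuous (S r ω) := ae_all_iff.2 hS_cont
  filter_upwards [hA, hB, hcontall] with ω hAω hBω hcω
  set Aseq : ℕ → C(H, ℝ) := fun R => (R : ℝ)⁻¹ • ∑ i ∈ Finset.range R, Y i ω with hAseq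
  set bseq : ℕ → ℝ := fun R => (∑ i ∈ Finset.range R, Nr i ω) / R with hbseq
  have hb0 : Tendsto bseq atTop (𝓝 nN) := hBω
  have hbinv : Tendsto (fun R => (bseq R)⁻¹) atTop (𝓝 nN⁻¹) := hb0.inv₀ hnN0
  have hF : Tendsto (fun R => (bseq R)⁻¹ • Aseq R - nN⁻¹ • M) atTop (𝓝 0) := by
    have := (hbinv.smul hAω).sub (tendsto_const_nhds (x := nN⁻¹ • M))
    simpa using this
  have hFnorm : Tendsto (fun R => ‖(bseq R)⁻¹ • Aseq R - nN⁻¹ • M‖) atTop (𝓝 0) := by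
    simpa using hF.norm
  refine hFnorm.congr' ?_
  rw [EventuallyEq, eventually_atTop]
  refine ⟨1, fun R hR => ?_⟩
  have hRpos : (0 : ℝ) < R := by exact_mod_cast hR
  have hsumN : (R : ℝ) ≤ ∑ i ∈ Finset.range R, Nr i ω := by
    calc (R : ℝ) = ∑ _i ∈ Finset.range R, (1 : ℝ) := by simp
    _ ≤ ∑ i ∈ Finset.range R, Nr i ω := by
        refine Finset.sum_le_sum fun i _ => ?_
        show (1 : ℝ) ≤ (N i ω : ℝ)
        exact_mod_cast hN_pos i ω
  have hsumNpos : (0 : ℝ) < ∑ i ∈ Finset.range R, Nr i ω := lt_of_lt_of_le hRpos hsumN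
  have hkey : ∀ h : H,
      ((bseq R)⁻¹ • Aseq R - nN⁻¹ • M) h
        = (∑ r ∈ Finset.range R, S r ω h) / (∑ r ∈ Finset.range R, (N r ω : ℝ))
          - (∫ ω', S 0 ω' h ∂μ) / nN := by
    intro h
    have hsum_eval : (∑ i ∈ Finset.range R, Y i ω) h = ∑ r ∈ Finset.range R, S r ω h := by
      rw [ContinuousMap.coe_sum, Finset.sum_apply]
      exact Finset.sum_congr rfl fun r _ => hΨeq _ (hcω r) h
    have : ((bseq R)⁻¹ • Aseq R - nN⁻¹ • M) h
        = (bseq R)⁻¹ * ((R : ℝ)⁻¹ * (∑ i ∈ Finset.range R, Y i ω) h) - nN⁻¹ * M h := by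
      simp [hAseq, ContinuousMap.smul_apply]
    rw [this, hsum_eval, hMh h]
    have hbR : bseq R = (∑ r ∈ Finset.range R, (N r ω : ℝ)) / R := rfl
    have hB0 : (∑ r ∈ Finset.range R, (N r ω : ℝ)) ≠ 0 := ne_of_gt hsumNpos
    have hR0 : (R : ℝ) ≠ 0 := ne_of_gt hRpos
    have hnNne : nN ≠ 0 := hnN0
    rw [hbR]
    field_simp
  have hnormsup : ‖(bseq R)⁻¹ • Aseq R - nN⁻¹ • M‖
      = ⨆ h : H, |((bseq R)⁻¹ • Aseq R - nN⁻¹ • M) h| := by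
    rw [ContinuousMap.norm_eq_iSup_norm]
    simp only [Real.norm_eq_abs]
  rw [hnormsup]
  congr 1
  funext h
  rw [hkey h]
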